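/- In the hardness construction of Theorem 1 (makespan exactly 3, communication range d = 1), in any feasible solution and for every index i ∈ [k], there is a single p ∈ [n] such that all agents α^i_j (j ∈ [k] \ {i}) occupy vertices of the path P^i_p at turn 1. Abstractly: if k−1 tokens start on the vertices a^i_1,...,a^i_k of a path, must each move in one step to a vertex among n disjoint paths P^i_1,...,P^i_n where vertex v^i_{p,j} is adjacent only to a^i_j and consecutive vertices of P^i_p, and the occupied set at turn 1 must induce a connected subgraph while no token remains on any a^i_j, then all tokens lie on the same path P^i_p. -/
import Mathlib


theorem stmt13 {V ι : Type*} [Nonempty ι] (G : SimpleGraph V) (k n : ℕ)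
    (a : Fin k → V) (v : Fin n → Fin k → V)
    -- distinct paths are vertex-disjoint, and each path has distinct vertices
    (hvinj : ∀ p p' j j', v p j = v p' j' → p = p' ∧ j = j')
    -- the paths are disjoint from the vertices a_1, ..., a_k
    (hav : ∀ p j j', v p j ≠ a j')
    -- v_{p,j} is adjacent only to a_j and to consecutive vertices of P_p
    (hadj : ∀ p j x, G.Adj (v p j) x →
        x = a j ∨ ∃ j' : Fin k, (j'.1 = j.1 + 1 ∨ j.1 = j'.1 + 1) ∧ x = v p j')
    -- the tokens at turn 1: injectively placed on path vertices, none on an a_j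
    (f : ι → V) (hfinj : Function.Injective f)
    (hf : ∀ i, ∃ p j, f i = v p j)
    (hnota : ∀ i j, f i ≠ a j)
    -- the occupied set induces a connected subgraph (d = 1 communication)
    (hconn : (G.induce (Set.range f)).Connected) :
    ∃ p : Fin n, ∀ i : ι, ∃ j : Fin k, f i = v p j := by
  obtain ⟨i0⟩ := ‹Nonempty ι›
  obtain ⟨p, j0, hj0⟩ := hf i0
  refine ⟨p, fun i => ?_⟩
  -- invariant along walks in the induced graph
  have key : ∀ (x y : ↑(Set.range f)), (G.induce (Set.range f)).Reachable x y →
      (∃ j, x.1 = v p j) → (∃ j, y.1 = v p j) := by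
    intro x y hr
    obtain ⟨w⟩ := hr
    induction w with
    | nil => exact id
    | cons h w ih =>
      rename_i u b c
      intro ⟨j, hj⟩
      apply ih
      have hadj' : G.Adj u.1 b.1 := h
      rw [hj] at hadj'
      rcases hadj p j b.1 hadj' with h1 | ⟨j', _, h2⟩
      · exfalso
        obtain ⟨ib, hib⟩ := b.2
        exact hnota ib j (hib.symm ▸ h1)
      · exact ⟨j', h2⟩
  obtain ⟨pi, ji, hji⟩ := hf i
  have hx : f i0 ∈ Set.range f := ⟨i0, rfl⟩
  have hy : f i ∈ Set.range f := ⟨i, rfl⟩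
  have := key ⟨f i0, hx⟩ ⟨f i, hy⟩ (hconn.preconnected _ _) ⟨j0, hj0⟩
  exact this
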